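/- arXiv:1507.02848 — 5 statements merged into one kernel-verified Lean document; each statement's English description precedes it below -/
import Mathlib

section
/- Let H be a Hilbert space and A, B closed subspaces. For any a ∈ A, the orthogonal projection of a onto the orthogonal complement of A ∩ B equals the strongly convergent sum over k ≥ 0 of P_B^⊥ (P_A^⊥ P_B^⊥)^k a − (P_A^⊥ P_B^⊥)^{k+1} a, where P_A^⊥ = I − P_A and P_B^⊥ = I − P_B are the projections onto the orthogonal complements of A and B. -/
open scoped InnerProductSpace

/-- The orthogonal projection of `H` onto the closed subspace `K`, as a map `H →L[ℂ] H`. -/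
noncomputable def projCLM {H : Type*} [NormedAddCommGroup H] [InnerProductSpace ℂ H]
    (K : Submodule ℂ H) [K.HasOrthogonalProjection] : H →L[ℂ] H :=
  K.subtypeL.comp K.orthogonalProjectionOnto

section Aux

variable {H : Type*} [NormedAddCommGroup H] [InnerProductSpace ℂ H]
variable (K : Submodule ℂ H) [K.HasOrthogonalProjection]

lemma projCLM_mem (x : H) : projCLM K x ∈ K := (K.orthogonalProjectionOnto x).2

lemma projCLM_eq_self {x : H} (hx : x ∈ K) : projCLM K x = x :=
  K.starProjection_eq_self_iff.mpr hx

lemma projCLM_idem (x : H) : projCLM K (projCLM K x) = projCLM K x :=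
  projCLM_eq_self K (projCLM_mem K x)

lemma inner_projCLM (u v : H) : ⟪projCLM K u, v⟫_ℂ = ⟪u, projCLM K v⟫_ℂ :=
  K.inner_starProjection_left_eq_right u v

lemma projCLM_norm_sq (x : H) :
    ‖x‖ * ‖x‖ = ‖projCLM K x‖ * ‖projCLM K x‖ + ‖x - projCLM K x‖ * ‖x - projCLM K x‖ := by
  have hmem : x - projCLM K x ∈ Kᗮ := K.sub_starProjection_mem_orthogonal x
  have h : ⟪projCLM K x, x - projCLM K x⟫_ℂ = 0 := hmem _ (projCLM_mem K x)
  have h2 := norm_add_sq_eq_norm_sq_add_norm_sq_of_inner_eq_zero _ _ h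
  rwa [add_sub_cancel] at h2

lemma norm_projCLM_le (x : H) : ‖projCLM K x‖ ≤ ‖x‖ := by
  have h := projCLM_norm_sq K x
  nlinarith [norm_nonneg x, norm_nonneg (projCLM K x), norm_nonneg (x - projCLM K x)]

lemma projCLM_eq_of_norm_le {x : H} (h : ‖x‖ ≤ ‖projCLM K x‖) : projCLM K x = x := by
  have h2 := projCLM_norm_sq K x
  have h3 : ‖x - projCLM K x‖ * ‖x - projCLM K x‖ ≤ 0 := by
    nlinarith [norm_nonneg x, norm_nonneg (projCLM K x)]
  have h4 : ‖x - projCLM K x‖ = 0 := by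
    nlinarith [norm_nonneg (x - projCLM K x)]
  have h5 : x - projCLM K x = 0 := norm_eq_zero.mp h4
  have := sub_eq_zero.mp h5
  exact this.symm

end Aux

theorem alternating_projection_rep {H : Type*} [NormedAddCommGroup H]
    [InnerProductSpace ℂ H] [CompleteSpace H] (A B : Submodule ℂ H)
    (hA : IsClosed (A : Set H)) (hB : IsClosed (B : Set H))
    [CompleteSpace A] [CompleteSpace B] [CompleteSpace ↥(A ⊓ B)]
    (a : H) (ha : a ∈ A) :
    HasSum
      (fun k : ℕ =>
        (1 - projCLM B) ((((1 - projCLM A) * (1 - projCLM B)) ^ k) a)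
          - (((1 - projCLM A) * (1 - projCLM B)) ^ (k + 1)) a)
      ((1 - projCLM (A ⊓ B)) a) := by
  classical
  set T : H →L[ℂ] H := (1 - projCLM A) * (1 - projCLM B) with hTdef
  set f : ℕ → H := fun k : ℕ =>
    (1 - projCLM B) ((T ^ k) a) - (T ^ (k + 1)) a with hfdef
  set S : H →L[ℂ] H := (projCLM A).comp ((projCLM B).comp (projCLM A)) with hSdef
  set x : ℕ → H := fun k => (S ^ k) a with hxdef
  have hx0 : x 0 = a := by simp [hxdef]
  have hxS : ∀ k, x (k + 1) = S (x k) := by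
    intro k
    simp only [hxdef, pow_succ', ContinuousLinearMap.mul_apply]
  have hSapp : ∀ v : H, S v = projCLM A (projCLM B (projCLM A v)) := fun v => rfl
  have hPAa : projCLM A a = a := projCLM_eq_self A ha
  have hPAx : ∀ k, projCLM A (x k) = x k := by
    intro k
    cases k with
    | zero => rw [hx0]; exact hPAa
    | succ k =>
        rw [hxS k, hSapp]
        exact projCLM_idem A _
  have hxmem : ∀ k, x k ∈ A := fun k => by rw [← hPAx k]; exact projCLM_mem A _
  have hTapp : ∀ v : H, T v = v - projCLM B v - projCLM A (v - projCLM B v) := by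
    intro v
    simp [hTdef, ContinuousLinearMap.mul_apply, ContinuousLinearMap.sub_apply,
      ContinuousLinearMap.one_apply]
  -- the key algebraic identity for powers of T
  have hu : ∀ k, (T ^ (k + 1)) a = x (k + 1) - projCLM B (x k) := by
    intro k
    induction k with
    | zero =>
        rw [pow_one, hTapp, hxS 0, hx0, hSapp, hPAa, map_sub, hPAa]
        abel
    | succ k ih =>
        rw [pow_succ', ContinuousLinearMap.mul_apply, ih, hTapp]
        have e1 : projCLM B (x (k + 1) - projCLM B (x k))
            = projCLM B (x (k + 1)) - projCLM B (x k) := by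
          rw [map_sub, projCLM_idem]
        rw [e1]
        have e2 : x (k + 1) - projCLM B (x k) - (projCLM B (x (k + 1)) - projCLM B (x k))
            = x (k + 1) - projCLM B (x (k + 1)) := by abel
        rw [e2, map_sub, hPAx (k + 1), hxS (k + 1), hSapp, hPAx (k + 1)]
        abel
  have hfx : ∀ k, f k = x k - x (k + 1) := by
    intro k
    cases k with
    | zero =>
        show (1 - projCLM B) ((T ^ 0) a) - (T ^ 1) a = x 0 - x 1
        rw [pow_zero, hu 0, hx0, ContinuousLinearMap.sub_apply, ContinuousLinearMap.one_apply,
          ContinuousLinearMap.one_apply]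
        abel
    | succ k =>
        show (1 - projCLM B) ((T ^ (k + 1)) a) - (T ^ (k + 2)) a = x (k + 1) - x (k + 2)
        rw [hu k, hu (k + 1), ContinuousLinearMap.sub_apply, ContinuousLinearMap.one_apply]
        have e1 : projCLM B (x (k + 1) - projCLM B (x k))
            = projCLM B (x (k + 1)) - projCLM B (x k) := by
          rw [map_sub, projCLM_idem]
        rw [e1]
        abel
  -- self-adjointness of S and basic inner product identities
  have hSadj : ∀ v w : H, ⟪S v, w⟫_ℂ = ⟪v, S w⟫_ℂ := by
    intro v w
    rw [hSapp, hSapp, inner_projCLM A, inner_projCLM B, inner_projCLM A]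
  have hxinner : ∀ n m, ⟪x (n + 1), x m⟫_ℂ = ⟪x n, x (m + 1)⟫_ℂ := by
    intro n m
    rw [hxS n, hxS m, hSadj]
  have hc : ∀ n m, ⟪x n, x m⟫_ℂ = ⟪x 0, x (n + m)⟫_ℂ := by
    intro n
    induction n with
    | zero => intro m; rw [Nat.zero_add]
    | succ n ih =>
        intro m
        rw [hxinner n m, ih (m + 1)]
        congr 2
        omega
  have h1 : ∀ v : H, ⟪v, S v⟫_ℂ = ((‖projCLM B (projCLM A v)‖ : ℝ) : ℂ) ^ 2 := by
    intro v
    rw [hSapp, ← inner_projCLM A]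
    conv_lhs => rw [← projCLM_idem B (projCLM A v)]
    rw [← inner_projCLM B, inner_self_eq_norm_sq_to_K]
    norm_cast
  have hdiff : ∀ j k, ⟪x j - x (j + 1), x k - x (k + 1)⟫_ℂ
      = ⟪x 0, x (j + k)⟫_ℂ - 2 * ⟪x 0, x (j + k + 1)⟫_ℂ + ⟪x 0, x (j + k + 2)⟫_ℂ := by
    intro j k
    rw [inner_sub_left, inner_sub_right, inner_sub_right, hc j k, hc j (k + 1), hc (j + 1) k,
      hc (j + 1) (k + 1)]
    have e1 : j + 1 + k = j + k + 1 := by omega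
    have e2 : j + (k + 1) = j + k + 1 := by omega
    have e3 : j + 1 + (k + 1) = j + k + 2 := by omega
    rw [e1, e2, e3]
    ring
  -- nonnegativity of cross inner products of summands
  have hfnn : ∀ j k, 0 ≤ RCLike.re ⟪f j, f k⟫_ℂ := by
    intro j k
    rw [hfx j, hfx k, hdiff j k]
    rcases Nat.even_or_odd (j + k) with ⟨p, hp⟩ | ⟨p, hp⟩
    · rw [hp, ← hdiff p p, inner_self_eq_norm_sq_to_K]
      norm_cast
      positivity
    · have hp' : j + k = p + (p + 1) := by omega
      rw [hp', ← hdiff p (p + 1)]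
      have e : x (p + 1) - x (p + 2) = S (x p - x (p + 1)) := by
        rw [map_sub, ← hxS p, ← hxS (p + 1)]
      rw [e, h1]
      norm_cast
      simp only [RCLike.re_to_complex, Complex.ofReal_re]
      positivity
  -- squared norm of finite partial sums
  have hnormsum : ∀ G : Finset ℕ,
      ‖∑ k ∈ G, f k‖ ^ 2 = ∑ j ∈ G, ∑ k ∈ G, RCLike.re ⟪f j, f k⟫_ℂ := by
    intro G
    rw [← inner_self_eq_norm_sq (𝕜 := ℂ), sum_inner, map_sum]
    refine Finset.sum_congr rfl fun j _ => ?_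
    rw [inner_sum, map_sum]
  -- the real sequence D
  set D : ℕ → ℝ := fun t => RCLike.re ⟪x 0, x t⟫_ℂ with hDdef
  have hDeven : ∀ p, D (p + p) = ‖x p‖ ^ 2 := by
    intro p
    show RCLike.re ⟪x 0, x (p + p)⟫_ℂ = _
    rw [← hc p p, inner_self_eq_norm_sq]
  have hDodd : ∀ p, D (p + p + 1) = ‖projCLM B (x p)‖ ^ 2 := by
    intro p
    show RCLike.re ⟪x 0, x (p + p + 1)⟫_ℂ = _
    have e : p + p + 1 = p + (p + 1) := by omega
    rw [e, ← hc p (p + 1), hxS p, h1 (x p), hPAx p]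
    norm_cast
  have hDanti : ∀ t, D (t + 1) ≤ D t := by
    intro t
    rcases Nat.even_or_odd t with ⟨p, hp⟩ | ⟨p, hp⟩
    · rw [hp, hDeven p, hDodd p]
      have := norm_projCLM_le B (x p)
      have hn : (0:ℝ) ≤ ‖projCLM B (x p)‖ := norm_nonneg _
      nlinarith [norm_nonneg (x p)]
    · have hp' : t = p + p + 1 := by omega
      have e : t + 1 = (p + 1) + (p + 1) := by omega
      rw [e, hp', hDodd p, hDeven (p + 1)]
      have e2 : x (p + 1) = projCLM A (projCLM B (x p)) := by
        rw [hxS p, hSapp, hPAx p]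
      rw [e2]
      have := norm_projCLM_le A (projCLM B (x p))
      nlinarith [norm_nonneg (projCLM A (projCLM B (x p))), norm_nonneg (projCLM B (x p))]
  have hDnn : ∀ t, 0 ≤ D t := by
    intro t
    rcases Nat.even_or_odd t with ⟨p, hp⟩ | ⟨p, hp⟩
    · rw [hp, hDeven p]; positivity
    · have hp' : t = p + p + 1 := by omega
      rw [hp', hDodd p]; positivity
  have hDcauchy : CauchySeq D := by
    have hanti : Antitone D := antitone_nat_of_succ_le hDanti
    have hbdd : BddBelow (Set.range D) := ⟨0, by rintro _ ⟨t, rfl⟩; exact hDnn t⟩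
    exact (tendsto_atTop_ciInf hanti hbdd).cauchySeq
  -- x is a Cauchy sequence
  have hxnorm : ∀ n m, ‖x n - x m‖ ^ 2 = D (n + n) - D (n + m) - D (n + m) + D (m + m) := by
    intro n m
    rw [← inner_self_eq_norm_sq (𝕜 := ℂ)]
    have e : ⟪x n - x m, x n - x m⟫_ℂ
        = ⟪x 0, x (n + n)⟫_ℂ - ⟪x 0, x (n + m)⟫_ℂ - (⟪x 0, x (m + n)⟫_ℂ - ⟪x 0, x (m + m)⟫_ℂ) := by
      rw [inner_sub_left, inner_sub_right, inner_sub_right, hc n n, hc n m, hc m n, hc m m]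
    rw [e, map_sub, map_sub, map_sub]
    have e2 : m + n = n + m := by omega
    rw [e2]
    show D (n + n) - D (n + m) - (D (n + m) - D (m + m)) = _
    ring
  have hxcauchy : CauchySeq x := by
    rw [Metric.cauchySeq_iff]
    intro ε hε
    obtain ⟨N, hN⟩ := Metric.cauchySeq_iff.1 hDcauchy (ε ^ 2 / 2) (by positivity)
    refine ⟨N, fun n hn m hm => ?_⟩
    have h1' : dist (D (n + n)) (D (n + m)) < ε ^ 2 / 2 := hN _ (by omega) _ (by omega)
    have h2' : dist (D (m + m)) (D (n + m)) < ε ^ 2 / 2 := hN _ (by omega) _ (by omega)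
    rw [Real.dist_eq] at h1' h2'
    have hsq : ‖x n - x m‖ ^ 2 < ε ^ 2 := by
      rw [hxnorm n m]
      have := abs_lt.1 h1'
      have := abs_lt.1 h2'
      linarith [(abs_lt.1 h1').2, (abs_lt.1 h2').2, (abs_lt.1 h1').1, (abs_lt.1 h2').1]
    rw [dist_eq_norm]
    exact lt_of_pow_lt_pow_left₀ 2 hε.le hsq
  obtain ⟨b, hb⟩ := cauchySeq_tendsto_of_complete hxcauchy
  -- identify b with the projection of a onto A ⊓ B
  have hbA : b ∈ A := hA.mem_of_tendsto hb (Filter.Eventually.of_forall hxmem)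
  have hSb : S b = b := by
    have t1 : Filter.Tendsto (fun n => x (n + 1)) Filter.atTop (nhds b) :=
      hb.comp (Filter.tendsto_add_atTop_nat 1)
    have t2 : Filter.Tendsto (fun n => S (x n)) Filter.atTop (nhds (S b)) :=
      (S.continuous.tendsto b).comp hb
    have e : (fun n => x (n + 1)) = fun n => S (x n) := funext hxS
    rw [e] at t1
    exact tendsto_nhds_unique t2 t1
  have hPAb : projCLM A b = b := projCLM_eq_self A hbA
  have hPABb : projCLM A (projCLM B b) = b := by
    have := hSb
    rw [hSapp, hPAb] at this
    exact this
  have hble : ‖b‖ ≤ ‖projCLM B b‖ := by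
    calc ‖b‖ = ‖projCLM A (projCLM B b)‖ := by rw [hPABb]
      _ ≤ ‖projCLM B b‖ := norm_projCLM_le A _
  have hPBb : projCLM B b = b := projCLM_eq_of_norm_le B hble
  have hbB : b ∈ B := hPBb ▸ projCLM_mem B b
  have hbAB : b ∈ A ⊓ B := Submodule.mem_inf.mpr ⟨hbA, hbB⟩
  have horth : ∀ w ∈ A ⊓ B, ⟪a - b, w⟫_ℂ = 0 := by
    intro w hw
    obtain ⟨hwA, hwB⟩ := Submodule.mem_inf.1 hw
    have hSw : S w = w := by
      rw [hSapp, projCLM_eq_self A hwA, projCLM_eq_self B hwB, projCLM_eq_self A hwA]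
    have hxw : ∀ n, ⟪x n, w⟫_ℂ = ⟪a, w⟫_ℂ := by
      intro n
      induction n with
      | zero => rw [hx0]
      | succ n ih => rw [hxS n, hSadj, hSw, ih]
    have t1 : Filter.Tendsto (fun n => ⟪x n, w⟫_ℂ) Filter.atTop (nhds ⟪b, w⟫_ℂ) :=
      hb.inner tendsto_const_nhds
    have e : (fun n => ⟪x n, w⟫_ℂ) = fun _ => ⟪a, w⟫_ℂ := funext hxw
    rw [e] at t1
    have hba : ⟪b, w⟫_ℂ = ⟪a, w⟫_ℂ := tendsto_nhds_unique t1 tendsto_const_nhds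
    rw [inner_sub_left, hba, sub_self]
  have hproj : projCLM (A ⊓ B) a = b :=
    Submodule.eq_starProjection_of_mem_of_inner_eq_zero hbAB horth
  have htarget : (1 - projCLM (A ⊓ B)) a = a - b := by
    rw [ContinuousLinearMap.sub_apply, ContinuousLinearMap.one_apply, hproj]
  -- summability
  have hsum : Summable f := by
    rw [summable_iff_vanishing_norm]
    intro ε hε
    obtain ⟨N, hN⟩ := Metric.cauchySeq_iff.1 hxcauchy (ε / 2) (by positivity)
    refine ⟨Finset.range N, fun t ht => ?_⟩
    set M : ℕ := N + 1 + t.sup id with hMdef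
    have hNM : N ≤ M := by omega
    have hsub : t ⊆ Finset.Ico N M := by
      intro k hk
      rw [Finset.mem_Ico]
      have h1' : k ∉ Finset.range N := Finset.disjoint_left.1 ht hk
      rw [Finset.mem_range, not_lt] at h1'
      have h2' : k ≤ t.sup id := Finset.le_sup (f := id) hk
      omega
    have h2 : ‖∑ k ∈ t, f k‖ ^ 2 ≤ ‖∑ k ∈ Finset.Ico N M, f k‖ ^ 2 := by
      rw [hnormsum, hnormsum]
      calc ∑ j ∈ t, ∑ k ∈ t, RCLike.re ⟪f j, f k⟫_ℂ
          ≤ ∑ j ∈ t, ∑ k ∈ Finset.Ico N M, RCLike.re ⟪f j, f k⟫_ℂ :=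
            Finset.sum_le_sum fun j _ =>
              Finset.sum_le_sum_of_subset_of_nonneg hsub fun k _ _ => hfnn j k
        _ ≤ ∑ j ∈ Finset.Ico N M, ∑ k ∈ Finset.Ico N M, RCLike.re ⟪f j, f k⟫_ℂ :=
            Finset.sum_le_sum_of_subset_of_nonneg hsub fun j _ _ =>
              Finset.sum_nonneg fun k _ => hfnn j k
    have hIco : ∑ k ∈ Finset.Ico N M, f k = x N - x M := by
      rw [Finset.sum_congr rfl fun k _ => hfx k, Finset.sum_Ico_eq_sub _ hNM,
        Finset.sum_range_sub' x M, Finset.sum_range_sub' x N]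
      abel
    have h3 : ‖x N - x M‖ < ε / 2 := by
      rw [← dist_eq_norm]
      exact hN N le_rfl M hNM
    rw [hIco] at h2
    have h4 : ‖∑ k ∈ t, f k‖ ≤ ‖x N - x M‖ := by
      have := Real.sqrt_le_sqrt h2
      rwa [Real.sqrt_sq (norm_nonneg _), Real.sqrt_sq (norm_nonneg _)] at this
    linarith
  -- partial sums converge to a - b
  have hpartial : ∀ n, ∑ k ∈ Finset.range n, f k = a - x n := by
    intro n
    rw [Finset.sum_congr rfl fun k _ => hfx k, Finset.sum_range_sub' x n, hx0]
  have hparts : Filter.Tendsto (fun n => ∑ k ∈ Finset.range n, f k)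
      Filter.atTop (nhds (a - b)) := by
    have e : (fun n => ∑ k ∈ Finset.range n, f k) = fun n => a - x n := funext hpartial
    rw [e]
    exact tendsto_const_nhds.sub hb
  have hhs := hsum.hasSum
  have heq : ∑' k, f k = a - b := tendsto_nhds_unique hhs.tendsto_sum_nat hparts
  rw [htarget, ← heq]
  exact hhs
end

section
/- Let H be a Hilbert space and A, B closed subspaces. For any a₁, a₂ ∈ A, the inner product ⟨P_{A∩B}^⊥ a₁, P_{A∩B}^⊥ a₂⟩ equals the sum over k ≥ 0 of ⟨P_B^⊥ (P_A^⊥ P_B^⊥)^k a₁, a₂⟩. -/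
open scoped InnerProductSpace

section Aux

variable {H : Type*} [NormedAddCommGroup H] [InnerProductSpace ℂ H]

section OneProj
variable (K : Submodule ℂ H) [K.HasOrthogonalProjection]

lemma inner_projCLM_left_eq_right (x y : H) :
    ⟪projCLM K x, y⟫_ℂ = ⟪x, projCLM K y⟫_ℂ := by
  exact K.inner_starProjection_left_eq_right x y

lemma sub_projCLM_mem_orthogonal (x : H) : x - projCLM K x ∈ Kᗮ :=
  K.sub_starProjection_mem_orthogonal x

lemma inner_projCLM_self (x : H) :
    ⟪projCLM K x, x⟫_ℂ = (‖projCLM K x‖ : ℂ) ^ 2 := by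
  have h : ⟪projCLM K x, x - projCLM K x⟫_ℂ = 0 :=
    (Submodule.mem_orthogonal K (x - projCLM K x)).1 (sub_projCLM_mem_orthogonal K x)
      _ (projCLM_mem K x)
  have h1 := inner_sub_right (𝕜 := ℂ) (projCLM K x) x (projCLM K x)
  rw [h] at h1
  have h2 : ⟪projCLM K x, x⟫_ℂ = ⟪projCLM K x, projCLM K x⟫_ℂ := by
    rw [← sub_eq_zero, ← h1]
  rw [h2, inner_self_eq_norm_sq_to_K]
  norm_num

lemma projCLM_eq_of_norm_eq {x : H} (h : ‖projCLM K x‖ = ‖x‖) : projCLM K x = x := by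
  have hi : ⟪projCLM K x, x - projCLM K x⟫_ℂ = 0 :=
    (Submodule.mem_orthogonal K (x - projCLM K x)).1 (sub_projCLM_mem_orthogonal K x)
      _ (projCLM_mem K x)
  have hp : ‖x‖ ^ 2 = ‖projCLM K x‖ ^ 2 + ‖x - projCLM K x‖ ^ 2 := by
    have := norm_add_sq (𝕜 := ℂ) (projCLM K x) (x - projCLM K x)
    simp only [hi, map_zero, mul_zero, add_zero] at this
    simpa [add_sub_cancel] using this
  have : ‖x - projCLM K x‖ ^ 2 = 0 := by
    rw [h] at hp; linarith
  have h0 : ‖x - projCLM K x‖ = 0 := by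
    nlinarith [norm_nonneg (x - projCLM K x)]
  have := norm_eq_zero.mp h0
  rw [sub_eq_zero] at this
  exact this.symm

lemma inner_one_sub_projCLM_left_eq_right (x y : H) :
    ⟪(1 - projCLM K) x, y⟫_ℂ = ⟪x, (1 - projCLM K) y⟫_ℂ := by
  simp only [ContinuousLinearMap.sub_apply, ContinuousLinearMap.one_apply,
    inner_sub_left, inner_sub_right]
  rw [inner_projCLM_left_eq_right]

end OneProj

variable (A B : Submodule ℂ H) [A.HasOrthogonalProjection] [B.HasOrthogonalProjection]

/-- The operator `P_A P_B P_A`. -/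
noncomputable def Sop : H →L[ℂ] H := projCLM A * projCLM B * projCLM A

lemma Sop_apply (x : H) : Sop A B x = projCLM A (projCLM B (projCLM A x)) := rfl

lemma inner_Sop_left_eq_right (x y : H) : ⟪Sop A B x, y⟫_ℂ = ⟪x, Sop A B y⟫_ℂ := by
  rw [Sop_apply, Sop_apply, inner_projCLM_left_eq_right,
    inner_projCLM_left_eq_right, inner_projCLM_left_eq_right]

lemma inner_Sop_pow_left_eq_right (k : ℕ) (x y : H) :
    ⟪(Sop A B ^ k) x, y⟫_ℂ = ⟪x, (Sop A B ^ k) y⟫_ℂ := by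
  induction k generalizing x y with
  | zero => simp
  | succ n ih =>
    have h1 : (Sop A B ^ (n + 1)) x = (Sop A B ^ n) (Sop A B x) := by rw [pow_succ]; rfl
    have h2 : (Sop A B ^ (n + 1)) y = Sop A B ((Sop A B ^ n) y) := by rw [pow_succ']; rfl
    rw [h1, h2, ih, inner_Sop_left_eq_right]

lemma inner_Sop_self (x : H) :
    ⟪Sop A B x, x⟫_ℂ = (‖projCLM B (projCLM A x)‖ : ℂ) ^ 2 := by
  rw [Sop_apply, inner_projCLM_left_eq_right, inner_projCLM_self]

lemma norm_Sop_le_inner (x : H) : ‖Sop A B x‖ ≤ ‖projCLM B (projCLM A x)‖ :=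
  norm_projCLM_le A _

end Aux
section Cseq

variable {H : Type*} [NormedAddCommGroup H] [InnerProductSpace ℂ H]
  (A B : Submodule ℂ H) [A.HasOrthogonalProjection] [B.HasOrthogonalProjection]

/-- The real sequence `⟪S^k x, x⟫` for `S = P_A P_B P_A`. -/
noncomputable def cseq (x : H) (k : ℕ) : ℝ := (⟪(Sop A B ^ k) x, x⟫_ℂ).re

lemma cseq_even (x : H) (m : ℕ) : cseq A B x (2 * m) = ‖(Sop A B ^ m) x‖ ^ 2 := by
  unfold cseq
  have h1 : (Sop A B ^ (2 * m)) x = (Sop A B ^ m) ((Sop A B ^ m) x) := by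
    rw [two_mul, pow_add]; rfl
  rw [h1, inner_Sop_pow_left_eq_right, inner_self_eq_norm_sq_to_K]
  norm_cast

lemma cseq_odd (x : H) (m : ℕ) :
    cseq A B x (2 * m + 1) = ‖projCLM B (projCLM A ((Sop A B ^ m) x))‖ ^ 2 := by
  unfold cseq
  have h1 : (Sop A B ^ (2 * m + 1)) x = (Sop A B ^ m) (Sop A B ((Sop A B ^ m) x)) := by
    have h2 : 2 * m + 1 = m + (1 + m) := by ring
    rw [h2, pow_add, pow_add, pow_one]; rfl
  rw [h1, inner_Sop_pow_left_eq_right, inner_Sop_self]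
  norm_cast

lemma cseq_succ_le (x : H) (k : ℕ) : cseq A B x (k + 1) ≤ cseq A B x k := by
  rcases Nat.even_or_odd k with ⟨m, hm⟩ | ⟨m, hm⟩
  · have hk : k = 2 * m := by omega
    subst hk
    rw [cseq_even, cseq_odd]
    have h1 : ‖projCLM B (projCLM A ((Sop A B ^ m) x))‖ ≤ ‖(Sop A B ^ m) x‖ :=
      le_trans (norm_projCLM_le B _) (norm_projCLM_le A _)
    exact pow_le_pow_left₀ (norm_nonneg _) h1 2
  · subst hm
    have h1 : 2 * m + 1 + 1 = 2 * (m + 1) := by ring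
    rw [h1, cseq_even, cseq_odd]
    have h2 : (Sop A B ^ (m + 1)) x = Sop A B ((Sop A B ^ m) x) := by
      rw [pow_succ']; rfl
    rw [h2]
    exact pow_le_pow_left₀ (norm_nonneg _) (norm_Sop_le_inner A B _) 2

lemma cseq_nonneg (x : H) (k : ℕ) : 0 ≤ cseq A B x k := by
  rcases Nat.even_or_odd k with ⟨m, hm⟩ | ⟨m, hm⟩
  · have hk : k = 2 * m := by omega
    subst hk; rw [cseq_even]; positivity
  · subst hm; rw [cseq_odd]; positivity

lemma cseq_antitone (x : H) : Antitone (cseq A B x) :=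
  antitone_nat_of_succ_le (cseq_succ_le A B x)

lemma re_inner_sub_pow (x : H) (k : ℕ) :
    (⟪((Sop A B ^ k) - (Sop A B ^ (k + 1))) x, x⟫_ℂ).re
      = cseq A B x k - cseq A B x (k + 1) := by
  simp [cseq, ContinuousLinearMap.sub_apply, inner_sub_left, Complex.sub_re]

lemma key_bound (k : ℕ) (x y : H) :
    2 * ‖⟪((Sop A B ^ k) - (Sop A B ^ (k + 1))) x, y⟫_ℂ‖
      ≤ (cseq A B x k - cseq A B x (k + 1)) + (cseq A B y k - cseq A B y (k + 1)) := by
  set G : H →L[ℂ] H := (Sop A B ^ k) - (Sop A B ^ (k + 1)) with hG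
  have hGsa : ∀ u v : H, ⟪G u, v⟫_ℂ = ⟪u, G v⟫_ℂ := by
    intro u v
    simp only [hG, ContinuousLinearMap.sub_apply, inner_sub_left, inner_sub_right,
      inner_Sop_pow_left_eq_right]
  have hpos : ∀ z : H, 0 ≤ (⟪G z, z⟫_ℂ).re := by
    intro z
    rw [hG, re_inner_sub_pow]
    have := cseq_succ_le A B z k
    linarith
  set t : ℂ := ⟪G x, y⟫_ℂ with ht
  rcases eq_or_ne t 0 with h0 | h0
  · rw [h0]
    simp only [norm_zero, mul_zero]
    have := hpos x; have := hpos y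
    rw [re_inner_sub_pow] at *
    linarith
  · set θ : ℂ := (‖t‖ : ℂ) / t with hθ
    have hθt : θ * t = (‖t‖ : ℂ) := div_mul_cancel₀ _ h0
    have hθn : Complex.normSq θ = 1 := by
      rw [hθ, Complex.normSq_div]
      simp [Complex.normSq_eq_norm_sq, Complex.norm_real]
      exact h0
    have hGyx : ⟪G y, x⟫_ℂ = (starRingEnd ℂ) t := by
      rw [hGsa y x, ← inner_conj_symm, ht]
    have hexp : ⟪G (x - θ • y), x - θ • y⟫_ℂ
        = ⟪G x, x⟫_ℂ + ⟪G y, y⟫_ℂ - 2 * (‖t‖ : ℂ) := by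
      rw [map_sub, G.map_smul]
      rw [inner_sub_left, inner_sub_right, inner_sub_right, inner_smul_left,
        inner_smul_right, inner_smul_right, inner_smul_left, hGyx]
      have hconjt : (starRingEnd ℂ) θ * ((starRingEnd ℂ) t) = (‖t‖ : ℂ) := by
        rw [← map_mul, hθt]
        simp [Complex.conj_ofReal]
      have hnsq : (starRingEnd ℂ) θ * θ = 1 := by
        rw [mul_comm, Complex.mul_conj, hθn]; norm_num
      calc ⟪G x, x⟫_ℂ - θ * ⟪G x, y⟫_ℂ -
            ((starRingEnd ℂ) θ * ((starRingEnd ℂ) t) - θ * ((starRingEnd ℂ) θ * ⟪G y, y⟫_ℂ))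
          = ⟪G x, x⟫_ℂ - θ * t - (starRingEnd ℂ) θ * ((starRingEnd ℂ) t)
              + ((starRingEnd ℂ) θ * θ) * ⟪G y, y⟫_ℂ := by rw [← ht]; ring
        _ = ⟪G x, x⟫_ℂ + ⟪G y, y⟫_ℂ - 2 * (‖t‖ : ℂ) := by
            rw [hθt, hconjt, hnsq]; ring
    have h0' := hpos (x - θ • y)
    rw [hexp] at h0'
    simp only [Complex.sub_re, Complex.add_re, Complex.mul_re, Complex.ofReal_re,
      Complex.ofReal_im] at h0'
    have hrx := re_inner_sub_pow A B x k
    have hry := re_inner_sub_pow A B y k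
    rw [← hG] at hrx hry
    rw [hrx, hry] at h0'
    norm_num at h0' ⊢
    linarith

end Cseq
section Conv

open Filter Topology

variable {H : Type*} [NormedAddCommGroup H] [InnerProductSpace ℂ H]
  (A B : Submodule ℂ H) [A.HasOrthogonalProjection] [B.HasOrthogonalProjection]

lemma re_inner_Sop_pow_pow (x : H) (n m : ℕ) :
    (⟪(Sop A B ^ n) x, (Sop A B ^ m) x⟫_ℂ).re = cseq A B x (n + m) := by
  have h1 : ⟪(Sop A B ^ n) x, (Sop A B ^ m) x⟫_ℂ = ⟪x, (Sop A B ^ (n + m)) x⟫_ℂ := by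
    rw [inner_Sop_pow_left_eq_right, pow_add]; rfl
  rw [h1]
  have h2 := inner_re_symm (𝕜 := ℂ) x ((Sop A B ^ (n + m)) x)
  simp only [RCLike.re_to_complex] at h2
  rw [h2]
  rfl

lemma norm_Sop_pow_sub_sq (x : H) (n m : ℕ) :
    ‖(Sop A B ^ n) x - (Sop A B ^ m) x‖ ^ 2
      = cseq A B x (2 * n) - 2 * cseq A B x (n + m) + cseq A B x (2 * m) := by
  have h := norm_sub_sq (𝕜 := ℂ) ((Sop A B ^ n) x) ((Sop A B ^ m) x)
  rw [h, ← cseq_even, ← cseq_even]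
  have h2 := re_inner_Sop_pow_pow A B x n m
  simp only [← RCLike.re_to_complex] at h2
  rw [h2]

lemma Sop_pow_tendsto_proj [CompleteSpace H] [(A ⊓ B).HasOrthogonalProjection] (x : H) :
    Tendsto (fun n => (Sop A B ^ n) x) atTop (𝓝 (projCLM (A ⊓ B) x)) := by
  set c := cseq A B x with hc
  have hbdd : BddBelow (Set.range c) := ⟨0, by rintro r ⟨k, rfl⟩; exact cseq_nonneg A B x k⟩
  set L : ℝ := ⨅ k, c k with hL
  have hcL : Tendsto c atTop (𝓝 L) := tendsto_atTop_ciInf (cseq_antitone A B x) hbdd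
  have hLle : ∀ k, L ≤ c k := fun k => ciInf_le hbdd k
  have hc2 : Tendsto (fun N => c (2 * N)) atTop (𝓝 L) :=
    hcL.comp (Filter.tendsto_atTop_atTop.mpr fun b => ⟨b, fun a ha => by omega⟩)
  have hcauchy : CauchySeq (fun n => (Sop A B ^ n) x) := by
    apply cauchySeq_of_le_tendsto_0 (b := fun N => Real.sqrt (2 * (c (2 * N) - L)))
    · intro n m N hn hm
      rw [dist_eq_norm]
      have hb : ‖(Sop A B ^ n) x - (Sop A B ^ m) x‖ ^ 2 ≤ 2 * (c (2 * N) - L) := by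
        rw [norm_Sop_pow_sub_sq]
        have h1 : c (2 * n) ≤ c (2 * N) := cseq_antitone A B x (by omega)
        have h2 : c (2 * m) ≤ c (2 * N) := cseq_antitone A B x (by omega)
        have h3 : L ≤ c (n + m) := hLle _
        linarith
      calc ‖(Sop A B ^ n) x - (Sop A B ^ m) x‖
          = Real.sqrt (‖(Sop A B ^ n) x - (Sop A B ^ m) x‖ ^ 2) :=
            (Real.sqrt_sq (norm_nonneg _)).symm
        _ ≤ Real.sqrt (2 * (c (2 * N) - L)) := Real.sqrt_le_sqrt hb
    · have h0 : Tendsto (fun N => 2 * (c (2 * N) - L)) atTop (𝓝 0) := by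
        have h0' : Tendsto (fun N => c (2 * N) - L) atTop (𝓝 (L - L)) :=
          hc2.sub tendsto_const_nhds
        rw [sub_self] at h0'
        simpa using h0'.const_mul (2 : ℝ)
      simpa [Real.sqrt_zero] using h0.sqrt
  obtain ⟨y, hy⟩ := cauchySeq_tendsto_of_complete hcauchy
  have hSy : Sop A B y = y := by
    have h1 : Tendsto (fun n => (Sop A B ^ (n + 1)) x) atTop (𝓝 y) :=
      hy.comp (tendsto_add_atTop_nat 1)
    have h2 : (fun n => (Sop A B ^ (n + 1)) x) = fun n => Sop A B ((Sop A B ^ n) x) := by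
      funext n; rw [pow_succ']; rfl
    rw [h2] at h1
    have h3 : Tendsto (fun n => Sop A B ((Sop A B ^ n) x)) atTop (𝓝 (Sop A B y)) :=
      ((Sop A B).continuous.tendsto y).comp hy
    exact tendsto_nhds_unique h3 h1
  have hyA : y ∈ A := by
    rw [← hSy, Sop_apply]; exact projCLM_mem A _
  have hPy : projCLM A y = y := projCLM_eq_self A hyA
  have hyB : y ∈ B := by
    have h1 : y = projCLM A (projCLM B y) := by
      conv_lhs => rw [← hSy, Sop_apply, hPy]
    have hle1 : ‖y‖ ≤ ‖projCLM B y‖ := by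
      conv_lhs => rw [h1]
      exact norm_projCLM_le A _
    have heq : ‖projCLM B y‖ = ‖y‖ := le_antisymm (norm_projCLM_le B y) hle1
    have h2 := projCLM_eq_of_norm_eq B heq
    rw [← h2]; exact projCLM_mem B y
  have hymem : y ∈ A ⊓ B := Submodule.mem_inf.mpr ⟨hyA, hyB⟩
  have hfix : ∀ w ∈ A ⊓ B, ∀ n : ℕ, (Sop A B ^ n) w = w := by
    intro w hw n
    obtain ⟨hwA, hwB⟩ := Submodule.mem_inf.mp hw
    induction n with
    | zero => simp
    | succ n ih =>
      rw [pow_succ]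
      have : (Sop A B ^ n * Sop A B) w = (Sop A B ^ n) (Sop A B w) := rfl
      rw [this, Sop_apply, projCLM_eq_self A hwA, projCLM_eq_self B hwB,
        projCLM_eq_self A hwA, ih]
  have horth : ∀ w ∈ A ⊓ B, ⟪x - y, w⟫_ℂ = 0 := by
    intro w hw
    have h1 : Tendsto (fun n => ⟪(Sop A B ^ n) x, w⟫_ℂ) atTop (𝓝 ⟪y, w⟫_ℂ) :=
      hy.inner tendsto_const_nhds
    have h2 : (fun n => ⟪(Sop A B ^ n) x, w⟫_ℂ) = fun _ => ⟪x, w⟫_ℂ := by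
      funext n
      rw [inner_Sop_pow_left_eq_right, hfix w hw n]
    rw [h2] at h1
    have h3 : ⟪y, w⟫_ℂ = ⟪x, w⟫_ℂ := tendsto_nhds_unique h1 tendsto_const_nhds
    rw [inner_sub_left, h3, sub_self]
  have hproj : projCLM (A ⊓ B) x = y :=
    Submodule.eq_starProjection_of_mem_of_inner_eq_zero hymem horth
  rw [hproj]
  exact hy

end Conv
section Series

open Filter Topology

variable {H : Type*} [NormedAddCommGroup H] [InnerProductSpace ℂ H]
  (A B : Submodule ℂ H) [A.HasOrthogonalProjection] [B.HasOrthogonalProjection]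

lemma projCLM_one_sub (z : H) : projCLM B ((1 - projCLM B) z) = 0 := by
  simp only [ContinuousLinearMap.sub_apply, ContinuousLinearMap.one_apply, map_sub]
  rw [projCLM_idem, sub_self]

lemma wseq_Q_zero (k : ℕ) (y : H) :
    projCLM B ((((1 - projCLM B) * (1 - projCLM A)) ^ k) ((1 - projCLM B) y)) = 0 := by
  cases k with
  | zero => simpa using projCLM_one_sub B y
  | succ n =>
    have h1 : (((1 - projCLM B) * (1 - projCLM A)) ^ (n + 1)) ((1 - projCLM B) y)
        = (1 - projCLM B) ((1 - projCLM A)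
            ((((1 - projCLM B) * (1 - projCLM A)) ^ n) ((1 - projCLM B) y))) := by
      rw [pow_succ']; rfl
    rw [h1, projCLM_one_sub]

lemma wseq_P_eq (k : ℕ) {y : H} (hy : y ∈ A) :
    projCLM A ((((1 - projCLM B) * (1 - projCLM A)) ^ k) ((1 - projCLM B) y))
      = (Sop A B ^ k) y - (Sop A B ^ (k + 1)) y := by
  induction k with
  | zero =>
    simp only [pow_zero, ContinuousLinearMap.one_apply, zero_add, pow_one]
    simp only [ContinuousLinearMap.sub_apply, ContinuousLinearMap.one_apply, map_sub]
    rw [projCLM_eq_self A hy, Sop_apply, projCLM_eq_self A hy]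
  | succ n ih =>
    set w := (((1 - projCLM B) * (1 - projCLM A)) ^ n) ((1 - projCLM B) y) with hw
    have h1 : (((1 - projCLM B) * (1 - projCLM A)) ^ (n + 1)) ((1 - projCLM B) y)
        = (1 - projCLM B) ((1 - projCLM A) w) := by
      rw [pow_succ']; rfl
    have hQw : projCLM B w = 0 := wseq_Q_zero A B n y
    have h2 : projCLM A ((1 - projCLM B) ((1 - projCLM A) w)) = Sop A B (projCLM A w) := by
      simp only [ContinuousLinearMap.sub_apply, ContinuousLinearMap.one_apply, map_sub,
        hQw, map_zero, projCLM_idem, Sop_apply]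
      abel
    rw [h1, h2, ih, map_sub]
    have h3 : Sop A B ((Sop A B ^ n) y) = (Sop A B ^ (n + 1)) y := by rw [pow_succ']; rfl
    have h4 : (Sop A B ^ (n + 2)) y = Sop A B ((Sop A B ^ (n + 1)) y) := by
      conv_lhs => rw [show n + 2 = (n + 1) + 1 from rfl, pow_succ']
      rfl
    rw [h3, ← h4]

lemma summand_eq_inner_w (k : ℕ) (x y : H) :
    ⟪(1 - projCLM B) ((((1 - projCLM A) * (1 - projCLM B)) ^ k) x), y⟫_ℂ
      = ⟪x, (((1 - projCLM B) * (1 - projCLM A)) ^ k) ((1 - projCLM B) y)⟫_ℂ := by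
  induction k generalizing x y with
  | zero =>
    simpa using inner_one_sub_projCLM_left_eq_right B x y
  | succ n ih =>
    have h1 : (((1 - projCLM A) * (1 - projCLM B)) ^ (n + 1)) x
        = (((1 - projCLM A) * (1 - projCLM B)) ^ n)
            ((1 - projCLM A) ((1 - projCLM B) x)) := by
      rw [pow_succ]; rfl
    have h2 : (((1 - projCLM B) * (1 - projCLM A)) ^ (n + 1)) ((1 - projCLM B) y)
        = (1 - projCLM B) ((1 - projCLM A)
            ((((1 - projCLM B) * (1 - projCLM A)) ^ n) ((1 - projCLM B) y))) := by
      rw [pow_succ']; rfl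
    rw [h1, h2, ih, inner_one_sub_projCLM_left_eq_right A,
      inner_one_sub_projCLM_left_eq_right B]

end Series

theorem alternating_projection_inner_rep {H : Type*} [NormedAddCommGroup H]
    [InnerProductSpace ℂ H] [CompleteSpace H] (A B : Submodule ℂ H)
    (hA : IsClosed (A : Set H)) (hB : IsClosed (B : Set H))
    [CompleteSpace A] [CompleteSpace B] [CompleteSpace ↥(A ⊓ B)]
    (a₁ a₂ : H) (ha₁ : a₁ ∈ A) (ha₂ : a₂ ∈ A) :
    ⟪(1 - projCLM (A ⊓ B)) a₁, (1 - projCLM (A ⊓ B)) a₂⟫_ℂ =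
      ∑' k : ℕ,
        ⟪(1 - projCLM B) ((((1 - projCLM A) * (1 - projCLM B)) ^ k) a₁), a₂⟫_ℂ := by
  classical
  open Filter Topology in
  set S := Sop A B with hS
  set f : ℕ → ℂ := fun k => ⟪a₁, (S ^ k) a₂⟫_ℂ with hf
  set summand : ℕ → ℂ :=
    fun k => ⟪(1 - projCLM B) ((((1 - projCLM A) * (1 - projCLM B)) ^ k) a₁), a₂⟫_ℂ with hsd
  -- each summand telescopes
  have hsummand : ∀ k, summand k = f k - f (k + 1) := by
    intro k
    rw [hsd]
    simp only []
    rw [summand_eq_inner_w A B k a₁ a₂]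
    set w := (((1 - projCLM B) * (1 - projCLM A)) ^ k) ((1 - projCLM B) a₂) with hw
    have hsplit : (⟪a₁, w - projCLM A w⟫_ℂ) = 0 :=
      (Submodule.mem_orthogonal A (w - projCLM A w)).1 (sub_projCLM_mem_orthogonal A w) a₁ ha₁
    have h1 : ⟪a₁, w⟫_ℂ = ⟪a₁, projCLM A w⟫_ℂ := by
      have := inner_sub_right (𝕜 := ℂ) a₁ w (projCLM A w)
      rw [hsplit] at this
      linear_combination -this
    rw [h1, wseq_P_eq A B k ha₂, inner_sub_right]
  -- summability
  have hbound : ∀ k, ‖summand k‖ ≤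
      ((cseq A B a₁ k - cseq A B a₁ (k + 1)) + (cseq A B a₂ k - cseq A B a₂ (k + 1))) / 2 := by
    intro k
    have h1 : summand k = ⟪a₁, ((S ^ k) - (S ^ (k + 1))) a₂⟫_ℂ := by
      rw [hsummand k, hf]
      simp only [ContinuousLinearMap.sub_apply]
      rw [inner_sub_right]
    have h2 : ‖summand k‖ = ‖⟪((S ^ k) - (S ^ (k + 1))) a₂, a₁⟫_ℂ‖ := by
      rw [h1, ← inner_conj_symm]
      exact RCLike.norm_conj _
    have h3 := key_bound A B k a₂ a₁
    rw [← hS] at h3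
    rw [h2]
    linarith
  have hgsum : Summable (fun k =>
      ((cseq A B a₁ k - cseq A B a₁ (k + 1)) + (cseq A B a₂ k - cseq A B a₂ (k + 1))) / 2) := by
    apply summable_of_sum_range_le (c := (cseq A B a₁ 0 + cseq A B a₂ 0) / 2)
    · intro n
      have h1 := cseq_succ_le A B a₁ n
      have h2 := cseq_succ_le A B a₂ n
      linarith
    · intro n
      have h1 : ∑ i ∈ Finset.range n,
          ((cseq A B a₁ i - cseq A B a₁ (i + 1)) + (cseq A B a₂ i - cseq A B a₂ (i + 1))) / 2
          = ((cseq A B a₁ 0 - cseq A B a₁ n) + (cseq A B a₂ 0 - cseq A B a₂ n)) / 2 := by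
        rw [← Finset.sum_div, Finset.sum_add_distrib,
          Finset.sum_range_sub' (fun i => cseq A B a₁ i),
          Finset.sum_range_sub' (fun i => cseq A B a₂ i)]
      rw [h1]
      have h2 := cseq_nonneg A B a₁ n
      have h3 := cseq_nonneg A B a₂ n
      linarith
  have hsum : Summable summand := Summable.of_norm_bounded hgsum hbound
  -- limit of partial sums
  have hE : Tendsto (fun n => (S ^ n) a₂) atTop (𝓝 (projCLM (A ⊓ B) a₂)) :=
    Sop_pow_tendsto_proj A B a₂
  have hftend : Tendsto (fun n => f n) atTop (𝓝 ⟪a₁, projCLM (A ⊓ B) a₂⟫_ℂ) :=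
    Filter.Tendsto.inner tendsto_const_nhds hE
  have hpartial : Tendsto (fun n => ∑ i ∈ Finset.range n, summand i) atTop
      (𝓝 (f 0 - ⟪a₁, projCLM (A ⊓ B) a₂⟫_ℂ)) := by
    have h1 : (fun n => ∑ i ∈ Finset.range n, summand i) = fun n => f 0 - f n := by
      funext n
      calc ∑ i ∈ Finset.range n, summand i = ∑ i ∈ Finset.range n, (f i - f (i + 1)) := by
            exact Finset.sum_congr rfl fun i _ => hsummand i
        _ = f 0 - f n := Finset.sum_range_sub' f n
    rw [h1]
    exact tendsto_const_nhds.sub hftend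
  have htsum : ∑' k, summand k = f 0 - ⟪a₁, projCLM (A ⊓ B) a₂⟫_ℂ :=
    tendsto_nhds_unique hsum.hasSum.tendsto_sum_nat hpartial
  -- the left-hand side
  have hlhs : ⟪(1 - projCLM (A ⊓ B)) a₁, (1 - projCLM (A ⊓ B)) a₂⟫_ℂ
      = f 0 - ⟪a₁, projCLM (A ⊓ B) a₂⟫_ℂ := by
    rw [inner_one_sub_projCLM_left_eq_right (A ⊓ B)]
    have h1 : (1 - projCLM (A ⊓ B)) ((1 - projCLM (A ⊓ B)) a₂)
        = (1 - projCLM (A ⊓ B)) a₂ := by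
      simp only [ContinuousLinearMap.sub_apply, ContinuousLinearMap.one_apply]
      rw [map_sub, projCLM_idem, sub_self, sub_zero]
    rw [h1]
    simp only [ContinuousLinearMap.sub_apply, ContinuousLinearMap.one_apply, inner_sub_right]
    rw [hf]
    simp
  rw [hlhs, ← htsum]
end

section
/- For d ∈ (−1/2, 1/2) \ {0}, let u_n = Γ(n+1−2d)Γ(n+1)/Γ(n+1−d)² for n ≥ 0. Then u_n = 1 + d²/n + O(n⁻²) as n → ∞. -/
open Filter Asymptotics Topology

set_option maxHeartbeats 1000000

lemma gamma_prod_aux (s : ℝ) (hs : -1 < s) (hs0 : s ≠ 0) (n : ℕ) :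
    Real.Gamma (s + n + 1) = Real.Gamma s * ∏ j ∈ Finset.range (n + 1), (s + j) := by
  induction n with
  | zero => simp [Real.Gamma_add_one hs0, mul_comm]
  | succ n ih =>
      have h1 : s + (n : ℝ) + 1 ≠ 0 := by
        have : (0:ℝ) ≤ (n:ℝ) := Nat.cast_nonneg n
        intro h; linarith
      have e : s + ((n : ℕ) + 1 : ℕ) + 1 = (s + n + 1) + 1 := by push_cast; ring
      rw [e, Real.Gamma_add_one h1, ih, Finset.prod_range_succ]
      push_cast
      ring_nf
      rw [show 2 + n = n + 1 + 1 from by ring, Finset.prod_range_succ, Finset.prod_range_succ]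
      push_cast
      ring

lemma tendsto_gamma_ratio (s : ℝ) (hs : -1 < s) (hs0 : s ≠ 0) :
    Tendsto (fun n : ℕ => (n : ℝ) ^ s * Real.Gamma (n + 1) / Real.Gamma ((n : ℝ) + 1 + s))
      atTop (𝓝 1) := by
  have hG : Real.Gamma s ≠ 0 := by
    refine Real.Gamma_ne_zero fun m => ?_
    rcases m with _ | m
    · simpa using hs0
    · intro h; rw [h] at hs; push_cast at hs; linarith [Nat.cast_nonneg (α := ℝ) m]
  have h := (Real.GammaSeq_tendsto_Gamma s).div_const (Real.Gamma s)
  rw [div_self hG] at h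
  refine h.congr fun n => ?_
  have hGn : Real.Gamma (s + n + 1) ≠ 0 := by
    have : (0:ℝ) < s + n + 1 := by
      have : (0:ℝ) ≤ (n:ℝ) := Nat.cast_nonneg n
      linarith
    exact (Real.Gamma_pos_of_pos this).ne'
  have hprod : ∏ j ∈ Finset.range (n + 1), (s + (j:ℝ)) = Real.Gamma (s + n + 1) / Real.Gamma s := by
    rw [gamma_prod_aux s hs hs0 n]; field_simp
  rw [Real.GammaSeq, hprod]
  rw [Real.Gamma_nat_eq_factorial]
  have e : (n:ℝ) + 1 + s = s + n + 1 := by ring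
  rw [e]
  field_simp

lemma tail_antitone_ge_one (a : ℕ → ℝ) (N : ℕ) (h : ∀ n, N ≤ n → a (n + 1) ≤ a n)
    (hl : Tendsto a atTop (𝓝 1)) : ∀ n, N ≤ n → 1 ≤ a n := by
  intro n hn
  refine le_of_tendsto hl (eventually_atTop.2 ⟨n, fun m hm => ?_⟩)
  induction m, hm using Nat.le_induction with
  | base => exact le_refl _
  | succ m hm ih => exact le_trans (h m (le_trans hn hm)) ih

lemma tail_monotone_le_one (a : ℕ → ℝ) (N : ℕ) (h : ∀ n, N ≤ n → a n ≤ a (n + 1))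
    (hl : Tendsto a atTop (𝓝 1)) : ∀ n, N ≤ n → a n ≤ 1 := by
  intro n hn
  refine ge_of_tendsto hl (eventually_atTop.2 ⟨n, fun m hm => ?_⟩)
  induction m, hm using Nat.le_induction with
  | base => exact le_refl _
  | succ m hm ih => exact le_trans ih (h m (le_trans hn hm))

theorem farima_prediction_error_asymp (d : ℝ) (hd : d ∈ Set.Ioo (-(1/2) : ℝ) (1/2))
    (hd0 : d ≠ 0) :
    (fun n : ℕ =>
        Real.Gamma (n + 1 - 2*d) * Real.Gamma (n + 1) / (Real.Gamma (n + 1 - d))^2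
          - (1 + d^2 / n)) =O[atTop] (fun n : ℕ => ((n : ℝ)^2)⁻¹) := by
  obtain ⟨hdl, hdr⟩ := hd
  set u : ℕ → ℝ := fun n =>
    Real.Gamma (n + 1 - 2*d) * Real.Gamma (n + 1) / (Real.Gamma (n + 1 - d))^2 with hu
  have hd2 : 0 < d^2 := by positivity
  have hcn : ∀ n : ℕ, (0:ℝ) ≤ (n:ℝ) := fun n => Nat.cast_nonneg n
  have h2d : ∀ n : ℕ, (0:ℝ) < (n:ℝ) + 1 - 2*d := fun n => by have := hcn n; linarith
  have h1d : ∀ n : ℕ, (0:ℝ) < (n:ℝ) + 1 - d := fun n => by have := hcn n; linarith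
  have h1 : ∀ n : ℕ, (0:ℝ) < (n:ℝ) + 1 := fun n => by have := hcn n; linarith
  have hupos : ∀ n, 0 < u n := fun n => by
    have := Real.Gamma_pos_of_pos (h2d n)
    have := Real.Gamma_pos_of_pos (h1d n)
    have := Real.Gamma_pos_of_pos (h1 n)
    simp only [hu]; positivity
  -- recurrence
  have hrec : ∀ n : ℕ, u (n+1) = u n * (((n:ℝ)+1-2*d)*((n:ℝ)+1)/((n:ℝ)+1-d)^2) := by
    intro n
    have e1 : ((n+1 : ℕ):ℝ) + 1 - 2*d = ((n:ℝ)+1-2*d) + 1 := by push_cast; ring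
    have e2 : ((n+1 : ℕ):ℝ) + 1 - d = ((n:ℝ)+1-d) + 1 := by push_cast; ring
    have e3 : ((n+1 : ℕ):ℝ) + 1 = ((n:ℝ)+1) + 1 := by push_cast; ring
    have hg := (Real.Gamma_pos_of_pos (h1d n)).ne'
    simp only [hu]
    rw [e1, e2, e3, Real.Gamma_add_one (h2d n).ne', Real.Gamma_add_one (h1d n).ne',
      Real.Gamma_add_one (h1 n).ne']
    field_simp
  -- limit
  have hlim : Tendsto u atTop (𝓝 1) := by
    have hA := tendsto_gamma_ratio (-d) (by linarith) (neg_ne_zero.2 hd0)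
    have hB := tendsto_gamma_ratio (-(2*d)) (by linarith)
      (by intro h; apply hd0; linarith [neg_eq_zero.mp h])
    have h3 := (hA.mul hA).div hB one_ne_zero
    rw [show (1:ℝ) * 1 / 1 = 1 from by norm_num] at h3
    refine Tendsto.congr' ?_ h3
    filter_upwards [eventually_ge_atTop 1] with n hn
    have hn0 : (0:ℝ) < (n:ℝ) := by exact_mod_cast hn
    have e1 : (n:ℝ)+1+-d = (n:ℝ)+1-d := by ring
    have e2 : (n:ℝ)+1+-(2*d) = (n:ℝ)+1-2*d := by ring
    have hg1 := (Real.Gamma_pos_of_pos (h1d n)).ne'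
    have hg2 := (Real.Gamma_pos_of_pos (h2d n)).ne'
    have hg3 := (Real.Gamma_pos_of_pos (h1 n)).ne'
    have hq : (n:ℝ)^(-d) ≠ 0 := (Real.rpow_pos_of_pos hn0 _).ne'
    simp only [hu, Pi.div_apply, Pi.mul_apply, e1, e2]
    rw [show ((n:ℝ) ^ (-(2*d))) = ((n:ℝ)^(-d))*((n:ℝ)^(-d)) from by
      rw [← Real.rpow_add hn0]; ring_nf]
    field_simp
  -- lower bound : 1 + d^2/(n+2) ≤ u n
  set L : ℕ → ℝ := fun n => 1 + d^2/((n:ℝ)+2) with hL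
  have hLpos : ∀ n, 0 < L n := fun n => by
    have := hcn n; simp only [hL]; positivity
  have hLlim : Tendsto L atTop (𝓝 1) := by
    have h0 : Tendsto (fun n : ℕ => d^2/((n:ℝ)+2)) atTop (𝓝 0) :=
      Tendsto.div_atTop tendsto_const_nhds
        (tendsto_atTop_add_const_right _ 2 tendsto_natCast_atTop_atTop)
    simpa using
      (tendsto_const_nhds.add h0 : Tendsto (fun n : ℕ => 1 + d^2/((n:ℝ)+2)) atTop (𝓝 (1+0)))
  have hlow : ∀ n : ℕ, L n ≤ u n := by
    have hdiv : Tendsto (fun n => u n / L n) atTop (𝓝 1) := by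
      have := hlim.div hLlim one_ne_zero; rw [div_one] at this; exact this
    have hstep : ∀ m : ℕ, 0 ≤ m → u (m+1) / L (m+1) ≤ u m / L m := by
      intro m _
      have hx := hcn m
      have key : ((m:ℝ)+1-2*d)*((m:ℝ)+1)/((m:ℝ)+1-d)^2 * L m ≤ L (m+1) := by
        have lhs_eq : ((m:ℝ)+1-2*d)*((m:ℝ)+1)/((m:ℝ)+1-d)^2 * L m =
            (((m:ℝ)+1-2*d)*((m:ℝ)+1)*(((m:ℝ)+2)+d^2)) / (((m:ℝ)+1-d)^2*((m:ℝ)+2)) := by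
          simp only [hL]
          have h0 : ((m:ℝ)+2) ≠ 0 := by linarith
          have h0' : ((m:ℝ)+1-d) ≠ 0 := (h1d m).ne'
          field_simp
        have rhs_eq : L (m+1) = (((m:ℝ)+3)+d^2)/((m:ℝ)+3) := by
          simp only [hL]
          have e : ((m+1:ℕ):ℝ) + 2 = (m:ℝ) + 3 := by push_cast; ring
          have h0 : ((m:ℝ)+3) ≠ 0 := by linarith
          rw [e, add_div' _ _ _ h0, one_mul]
        have hcoef : (0:ℝ) ≤ 3+2*d+d^2 := by nlinarith [sq_nonneg (d+1)]
        have hkey : (0:ℝ) < (m:ℝ)*(3+2*d+d^2)+(5+2*d+2*d^2) := by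
          nlinarith [mul_nonneg hx hcoef, sq_nonneg d]
        rw [lhs_eq, rhs_eq,
          div_le_div_iff₀ (mul_pos (pow_pos (h1d m) 2) (by linarith : (0:ℝ) < (m:ℝ)+2))
            (by linarith : (0:ℝ) < (m:ℝ)+3)]
        nlinarith [mul_pos hd2 hkey]
      rw [div_le_div_iff₀ (hLpos (m+1)) (hLpos m)]
      calc u (m+1) * L m = u m * (((m:ℝ)+1-2*d)*((m:ℝ)+1)/((m:ℝ)+1-d)^2 * L m) := by
            rw [hrec m]; ring
        _ ≤ u m * L (m+1) := mul_le_mul_of_nonneg_left key (hupos m).le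
    intro n
    have := tail_antitone_ge_one (fun n => u n / L n) 0 hstep hdiv n (Nat.zero_le n)
    exact (one_le_div (hLpos n)).mp this
  -- upper bound : u n ≤ 1 + d^2/(n-2) for n ≥ 3
  set U : ℕ → ℝ := fun n => 1 + d^2/((n:ℝ)-2) with hUdef
  have hUpos : ∀ n : ℕ, 3 ≤ n → 0 < U n := by
    intro n hn
    have hx : (3:ℝ) ≤ (n:ℝ) := by exact_mod_cast hn
    simp only [hUdef]
    have : (0:ℝ) < (n:ℝ)-2 := by linarith
    positivity
  have hUlim : Tendsto U atTop (𝓝 1) := by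
    have h0 : Tendsto (fun n : ℕ => d^2/((n:ℝ)-2)) atTop (𝓝 0) := by
      refine Tendsto.div_atTop tendsto_const_nhds ?_
      simpa [sub_eq_add_neg] using
        tendsto_atTop_add_const_right atTop (-2 : ℝ) tendsto_natCast_atTop_atTop
    simpa using
      (tendsto_const_nhds.add h0 : Tendsto (fun n : ℕ => 1 + d^2/((n:ℝ)-2)) atTop (𝓝 (1+0)))
  have hup : ∀ n : ℕ, 3 ≤ n → u n ≤ U n := by
    have hdiv : Tendsto (fun n => u n / U n) atTop (𝓝 1) := by
      have := hlim.div hUlim one_ne_zero; rw [div_one] at this; exact this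
    have hstep : ∀ m : ℕ, 3 ≤ m → u m / U m ≤ u (m+1) / U (m+1) := by
      intro m hm
      have hx : (3:ℝ) ≤ (m:ℝ) := by exact_mod_cast hm
      have key : U (m+1) ≤ ((m:ℝ)+1-2*d)*((m:ℝ)+1)/((m:ℝ)+1-d)^2 * U m := by
        have lhs_eq : ((m:ℝ)+1-2*d)*((m:ℝ)+1)/((m:ℝ)+1-d)^2 * U m =
            (((m:ℝ)+1-2*d)*((m:ℝ)+1)*(((m:ℝ)-2)+d^2)) / (((m:ℝ)+1-d)^2*((m:ℝ)-2)) := by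
          simp only [hUdef]
          have h0 : ((m:ℝ)-2) ≠ 0 := by linarith
          have h0' : ((m:ℝ)+1-d) ≠ 0 := (h1d m).ne'
          field_simp
        have rhs_eq : U (m+1) = (((m:ℝ)-1)+d^2)/((m:ℝ)-1) := by
          simp only [hUdef]
          have e : ((m+1:ℕ):ℝ) - 2 = (m:ℝ) - 1 := by push_cast; ring
          have h0 : ((m:ℝ)-1) ≠ 0 := by linarith
          rw [e, add_div' _ _ _ h0, one_mul]
        have hm2 : (0:ℝ) < (m:ℝ)-2 := by linarith
        have hdd : d^2 < 1/4 := by nlinarith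
        have hcoef : (0:ℝ) ≤ 5-2*d-d^2 := by nlinarith
        have hkey : (0:ℝ) < (m:ℝ)*(5-2*d-d^2)+(2*d^2-2*d-1) := by
          nlinarith [mul_nonneg (by linarith : (0:ℝ) ≤ (m:ℝ)-3) hcoef]
        rw [lhs_eq, rhs_eq,
          div_le_div_iff₀ (by linarith : (0:ℝ) < (m:ℝ)-1)
            (mul_pos (pow_pos (h1d m) 2) hm2)]
        nlinarith [mul_pos hd2 hkey]
      rw [div_le_div_iff₀ (hUpos m hm) (hUpos (m+1) (by omega))]
      calc u m * U (m+1) ≤ u m * (((m:ℝ)+1-2*d)*((m:ℝ)+1)/((m:ℝ)+1-d)^2 * U m) :=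
            mul_le_mul_of_nonneg_left key (hupos m).le
        _ = u (m+1) * U m := by rw [hrec m]; ring
    intro n hn
    have := tail_monotone_le_one (fun n => u n / U n) 3 hstep hdiv n hn
    exact (div_le_one (hUpos n hn)).mp this
  -- conclusion
  rw [isBigO_iff]
  refine ⟨4*d^2, ?_⟩
  filter_upwards [eventually_ge_atTop 4] with n hn
  have hx : (4:ℝ) ≤ (n:ℝ) := by exact_mod_cast hn
  have hxpos : (0:ℝ) < (n:ℝ) := by linarith
  have hU := hup n (by omega)
  have hLn := hlow n
  simp only [hUdef, hL] at hU hLn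
  rw [Real.norm_eq_abs, Real.norm_eq_abs,
    abs_of_nonneg (by positivity : (0:ℝ) ≤ (((n:ℝ)^2)⁻¹))]
  have hub : d^2/((n:ℝ)-2) - d^2/(n:ℝ) ≤ 4*d^2 * ((n:ℝ)^2)⁻¹ := by
    rw [div_sub_div _ _ (by linarith : ((n:ℝ)-2) ≠ 0) hxpos.ne', ← div_eq_mul_inv,
      div_le_div_iff₀ (mul_pos (by linarith : (0:ℝ) < (n:ℝ)-2) hxpos) (by positivity)]
    nlinarith [mul_nonneg (mul_nonneg (sq_nonneg d) hxpos.le)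
      (by linarith : (0:ℝ) ≤ (n:ℝ)-4)]
  have hlb : d^2/(n:ℝ) - d^2/((n:ℝ)+2) ≤ 4*d^2 * ((n:ℝ)^2)⁻¹ := by
    rw [div_sub_div _ _ hxpos.ne' (by linarith : ((n:ℝ)+2) ≠ 0), ← div_eq_mul_inv,
      div_le_div_iff₀ (mul_pos hxpos (by linarith : (0:ℝ) < (n:ℝ)+2)) (by positivity)]
    nlinarith [mul_nonneg (sq_nonneg d) hxpos.le,
      mul_nonneg (sq_nonneg d) (sq_nonneg (n:ℝ))]
  rw [abs_le]
  constructor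
  · linarith
  · linarith
end

section
/- Let d ∈ (−1/2, 1/2) \ {0}, and define ρ_n = sin(πd)/(π(n−d)) for n ∈ ℤ. Then for θ ∈ (−π, π) \ {0}, define Ω(e^{iθ}) = e^{id(θ−π)} if 0 < θ < π and Ω(e^{iθ}) = e^{id(θ+π)} if −π < θ < 0. We have −(1/2π) ∫_{−π}^{π} e^{−inθ} Ω(e^{iθ}) dθ = ρ_n for every n ∈ ℤ. -/
open Real

theorem phase_fourier_coeff (d : ℝ) (hd : d ∈ Set.Ioo (-(1/2) : ℝ) (1/2)) (hd0 : d ≠ 0)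
    (n : ℤ) :
    -(1 / (2 * (π : ℂ))) *
        ∫ θ in (-π)..π,
          Complex.exp (-(n : ℂ) * θ * Complex.I) *
            (if 0 < θ then Complex.exp (Complex.I * d * ((θ : ℂ) - π))
             else Complex.exp (Complex.I * d * ((θ : ℂ) + π)))
      = ((Real.sin (π * d) / (π * ((n : ℝ) - d)) : ℝ) : ℂ) := by
  obtain ⟨hd1, hd2⟩ := hd
  have hπ : (0:ℝ) < π := Real.pi_pos
  have hdn : d - (n:ℝ) ≠ 0 := by
    intro h
    have hn : (n:ℝ) = d := by linarith [sub_eq_zero.mp h]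
    have h1 : |(n:ℝ)| < 1 := by rw [hn]; rw [abs_lt]; constructor <;> linarith
    have h2 : |n| < 1 := by exact_mod_cast h1
    have : n = 0 := by have := abs_lt.mp h2; omega
    apply hd0; rw [this] at hn; simpa using hn.symm
  set c : ℂ := Complex.I * ((d:ℂ) - (n:ℂ)) with hc
  have hc0 : c ≠ 0 := by
    apply mul_ne_zero Complex.I_ne_zero
    rw [sub_ne_zero]
    exact_mod_cast fun h => hdn (by exact_mod_cast sub_eq_zero.mpr h)
  set A : ℂ := Complex.I * (d:ℂ) * (π:ℂ) with hA
  set N : ℂ := Complex.I * (n:ℂ) * (π:ℂ) with hN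
  set f : ℝ → ℂ := fun θ =>
    Complex.exp (-(n : ℂ) * θ * Complex.I) *
      (if 0 < θ then Complex.exp (Complex.I * d * ((θ : ℂ) - π))
       else Complex.exp (Complex.I * d * ((θ : ℂ) + π))) with hf
  have hg1 : ∀ θ : ℝ, θ ∈ Set.Ioc (0:ℝ) π → f θ = Complex.exp (c * θ) * Complex.exp (-A) := by
    intro θ hθ
    simp only [hf, if_pos hθ.1, ← Complex.exp_add]
    congr 1
    simp only [hc, hA]
    ring
  have hg2 : ∀ θ : ℝ, θ ∈ Set.Ioc (-π) (0:ℝ) → f θ = Complex.exp (c * θ) * Complex.exp A := by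
    intro θ hθ
    simp only [hf, if_neg (not_lt.mpr hθ.2), ← Complex.exp_add]
    congr 1
    simp only [hc, hA]
    ring
  have hcont : ∀ z : ℂ, Continuous fun θ : ℝ => Complex.exp (c * θ) * Complex.exp z := by
    intro z
    exact (Complex.continuous_exp.comp (continuous_const.mul Complex.continuous_ofReal)).mul
      continuous_const
  have hset1 : Set.uIoc (-π) (0:ℝ) = Set.Ioc (-π) 0 := Set.uIoc_of_le (by linarith)
  have hset2 : Set.uIoc (0:ℝ) π = Set.Ioc 0 π := Set.uIoc_of_le hπ.le
  have hint1 : IntervalIntegrable f MeasureTheory.volume (-π) 0 := by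
    apply ((hcont A).intervalIntegrable (-π) 0).congr_ae
    exact Filter.eventuallyEq_of_mem
      (by rw [hset1]; exact MeasureTheory.self_mem_ae_restrict measurableSet_Ioc)
      (fun x hx => (hg2 x hx).symm)
  have hint2 : IntervalIntegrable f MeasureTheory.volume 0 π := by
    apply ((hcont (-A)).intervalIntegrable 0 π).congr_ae
    exact Filter.eventuallyEq_of_mem
      (by rw [hset2]; exact MeasureTheory.self_mem_ae_restrict measurableSet_Ioc)
      (fun x hx => (hg1 x hx).symm)
  have h1 : (∫ θ in (0:ℝ)..π, f θ)
      = ((Complex.exp (c * π) - 1) / c) * Complex.exp (-A) := by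
    rw [intervalIntegral.integral_congr_ae (g := fun θ : ℝ => Complex.exp (c * θ) * Complex.exp (-A))
      (Filter.Eventually.of_forall fun x hx => hg1 x (by rwa [Set.uIoc_of_le hπ.le] at hx))]
    rw [intervalIntegral.integral_mul_const, integral_exp_mul_complex hc0]
    simp
  have h2 : (∫ θ in (-π)..(0:ℝ), f θ)
      = ((1 - Complex.exp (-(c * π))) / c) * Complex.exp A := by
    rw [intervalIntegral.integral_congr_ae (g := fun θ : ℝ => Complex.exp (c * θ) * Complex.exp A)
      (Filter.Eventually.of_forall fun x hx => hg2 x (by rwa [Set.uIoc_of_le (by linarith : -π ≤ (0:ℝ))] at hx))]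
    rw [intervalIntegral.integral_mul_const, integral_exp_mul_complex hc0]
    have h0 : c * ((-π : ℝ) : ℂ) = -(c * (π:ℝ)) := by push_cast; ring
    rw [h0]
    simp
  have hsplit : (∫ θ in (-π)..π, f θ) = (∫ θ in (-π)..(0:ℝ), f θ) + ∫ θ in (0:ℝ)..π, f θ :=
    (intervalIntegral.integral_add_adjacent_intervals hint1 hint2).symm
  -- key exponential identities
  have hcπ : c * (π:ℂ) = A - N := by simp only [hc, hA, hN]; ring
  have hNN : Complex.exp N = Complex.exp (-N) := by
    have : Complex.exp (-N) * Complex.exp ((n:ℂ) * (2 * π * Complex.I)) = Complex.exp N := by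
      rw [← Complex.exp_add]; congr 1; simp only [hN]; ring
    rw [← this, Complex.exp_int_mul_two_pi_mul_I, mul_one]
  have hAN : Complex.exp (A - N) = Complex.exp A * Complex.exp (-N) := by
    rw [← Complex.exp_add]; ring_nf
  have hANn : Complex.exp (-(A - N)) = Complex.exp (-A) * Complex.exp N := by
    rw [← Complex.exp_add]; ring_nf
  have hai : Complex.exp A * Complex.exp (-A) = 1 := by
    rw [← Complex.exp_add]; simp
  have hni : Complex.exp N * Complex.exp (-N) = 1 := by
    rw [← Complex.exp_add]; simp
  have hsin : Complex.exp A - Complex.exp (-A) = 2 * Complex.I * (Real.sin (π * d) : ℂ) := by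
    have hA' : A = ((π * d : ℝ) : ℂ) * Complex.I := by rw [hA]; push_cast; ring
    rw [hA', ← neg_mul, Complex.exp_mul_I, Complex.exp_mul_I, Complex.cos_neg, Complex.sin_neg,
      ← Complex.ofReal_sin]
    ring
  rw [hsplit, h1, h2, hcπ, hAN, hANn]
  have hsum : (1 - Complex.exp (-A) * Complex.exp N) / c * Complex.exp A +
      (Complex.exp A * Complex.exp (-N) - 1) / c * Complex.exp (-A)
      = 2 * Complex.I * (Real.sin (π * d) : ℂ) / c := by
    rw [div_mul_eq_mul_div, div_mul_eq_mul_div, ← add_div]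
    congr 1
    linear_combination hsin + (Complex.exp (-N) - Complex.exp N) * hai - hNN
  rw [hsum, hc]
  have hπc : (π:ℂ) ≠ 0 := by exact_mod_cast hπ.ne'
  have hdnc : (d:ℂ) - (n:ℂ) ≠ 0 := by
    rw [sub_ne_zero]
    exact_mod_cast fun h => hdn (by exact_mod_cast sub_eq_zero.mpr h)
  have hndc : (n:ℂ) - (d:ℂ) ≠ 0 := fun h => hdnc (by linear_combination -h)
  have hred : 2 * Complex.I * (Real.sin (π * d) : ℂ) / (Complex.I * ((d:ℂ) - (n:ℂ)))
      = 2 * (Real.sin (π * d) : ℂ) / ((d:ℂ) - (n:ℂ)) := by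
    rw [show 2 * Complex.I * (Real.sin (π * d) : ℂ) =
      Complex.I * (2 * (Real.sin (π * d) : ℂ)) from by ring,
      mul_div_mul_left _ _ Complex.I_ne_zero]
  rw [hred]
  rw [Complex.ofReal_div]
  push_cast
  field_simp
  ring
end

section
/- Let d ∈ (−1/2, 1/2) \ {0} and ρ_n = sin(πd)/(π(n−d)). Let (s_k)_{k∈ℤ} be a complex sequence with ∑_{k∈ℤ} k² |s_k| < ∞. Then lim_{n→∞} n (ρ_n^{−1} ∑_{k∈ℤ} ρ_{n−k} s_k − ∑_{k∈ℤ} s_k) = ∑_{k∈ℤ} k s_k. -/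
open Filter

set_option maxHeartbeats 1000000 in
theorem rho_convolution_limit (d : ℝ) (hd : d ∈ Set.Ioo (-(1/2) : ℝ) (1/2)) (hd0 : d ≠ 0)
    (ρ : ℤ → ℝ) (hρ : ∀ m : ℤ, ρ m = Real.sin (Real.pi * d) / (Real.pi * ((m : ℝ) - d)))
    (s : ℤ → ℂ) (hs : Summable (fun k : ℤ => (k : ℝ)^2 * ‖s k‖)) :
    Tendsto
      (fun n : ℕ =>
        (n : ℂ) * (((ρ n : ℝ) : ℂ)⁻¹ * ∑' k : ℤ, ((ρ ((n : ℤ) - k) : ℝ) : ℂ) * s k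
          - ∑' k : ℤ, s k))
      atTop (nhds (∑' k : ℤ, (k : ℂ) * s k)) := by
  obtain ⟨hd1, hd2⟩ := hd
  have hdabs : |d| ≤ 1/2 := by rw [abs_le]; constructor <;> linarith
  have hdabs' : |d| < 1/2 := by rw [abs_lt]; constructor <;> linarith
  set c : ℝ := min |d| (1/2) with hc_def
  have hc : 0 < c := lt_min (abs_pos.mpr hd0) (by norm_num)
  have hcm : ∀ m : ℤ, c ≤ |(m : ℝ) - d| := by
    intro m
    rcases eq_or_ne m 0 with rfl | hm
    · simp only [Int.cast_zero, zero_sub, abs_neg]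
      exact min_le_left _ _
    · have h1 : (1 : ℝ) ≤ |(m : ℝ)| := by
        rw [← Int.cast_abs]; exact_mod_cast Int.one_le_abs hm
      have := abs_sub_abs_le_abs_sub (m : ℝ) d
      have : 1/2 ≤ |(m : ℝ) - d| := by linarith
      exact le_trans (min_le_right _ _) this
  have hπ : (0 : ℝ) < Real.pi := Real.pi_pos
  set S : ℝ := Real.sin (Real.pi * d) with hS_def
  have hS : S ≠ 0 := by
    intro h
    rw [hS_def, Real.sin_eq_zero_iff] at h
    obtain ⟨m, hm⟩ := h
    have hdm : d = (m : ℝ) := by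
      have hpd : Real.pi * d = Real.pi * (m : ℝ) := by linarith [hm]
      exact mul_left_cancel₀ (ne_of_gt hπ) hpd
    rcases eq_or_ne m 0 with rfl | hm0
    · exact hd0 (by simpa using hdm)
    · have h1 : (1 : ℝ) ≤ |(m : ℝ)| := by
        rw [← Int.cast_abs]; exact_mod_cast Int.one_le_abs hm0
      rw [hdm] at hdabs'
      linarith
  have hden : ∀ m : ℤ, ((m : ℝ) - d) ≠ 0 := by
    intro m h
    have := hcm m
    rw [h, abs_zero] at this
    linarith
  have hρne : ∀ m : ℤ, ρ m ≠ 0 := by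
    intro m
    rw [hρ m]
    exact div_ne_zero hS (mul_ne_zero (ne_of_gt hπ) (hden m))
  have hρbound : ∀ m : ℤ, |ρ m| ≤ |S| / (Real.pi * c) := by
    intro m
    rw [hρ m, abs_div, abs_mul, abs_of_pos hπ]
    apply div_le_div_of_nonneg_left (abs_nonneg _) (by positivity)
    exact mul_le_mul_of_nonneg_left (hcm m) (le_of_lt hπ)
  -- abbreviation
  set a : ℤ → ℝ := fun k => ‖s k‖ with ha_def
  have ha_nonneg : ∀ k, 0 ≤ a k := fun k => norm_nonneg _
  have habs_le_sq : ∀ k : ℤ, |(k : ℝ)| ≤ (k : ℝ)^2 := by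
    intro k
    rcases eq_or_ne k 0 with rfl | hk
    · simp
    · have h1 : (1 : ℝ) ≤ |(k : ℝ)| := by
        rw [← Int.cast_abs]; exact_mod_cast Int.one_le_abs hk
      nlinarith [sq_abs ((k : ℝ))]
  have ha_sum : Summable a := by
    apply hs.of_norm_bounded_eventually
    have : {k : ℤ | ¬ ‖a k‖ ≤ (k : ℝ)^2 * a k} ⊆ {0} := by
      intro k hk
      simp only [Set.mem_setOf_eq, not_le] at hk
      by_contra hk0
      have h1 : (1 : ℝ) ≤ (k : ℝ)^2 := by
        have := habs_le_sq k
        have h2 : (1 : ℝ) ≤ |(k : ℝ)| := by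
          rw [← Int.cast_abs]
          exact_mod_cast Int.one_le_abs (by simpa using hk0)
        linarith
      rw [Real.norm_eq_abs, abs_of_nonneg (ha_nonneg k)] at hk
      nlinarith [ha_nonneg k]
    exact Set.Finite.subset (Set.finite_singleton 0) this
  have hka_sum : Summable (fun k : ℤ => |(k : ℝ)| * a k) :=
    hs.of_nonneg_of_le (fun k => by positivity)
      (fun k => mul_le_mul_of_nonneg_right (habs_le_sq k) (ha_nonneg k))
  have hsum_s : Summable s := by
    apply Summable.of_norm
    simpa using ha_sum
  have hsum_ks : Summable (fun k : ℤ => (k : ℂ) * s k) := by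
    apply Summable.of_norm
    apply hka_sum.of_nonneg_of_le (fun k => norm_nonneg _)
    intro k
    rw [norm_mul]
    simp [ha_def]
  have hsum_ρ : ∀ n : ℤ, Summable (fun k : ℤ => ((ρ (n - k) : ℝ) : ℂ) * s k) := by
    intro n
    apply Summable.of_norm
    apply (ha_sum.mul_left (|S| / (Real.pi * c))).of_nonneg_of_le
      (fun k => norm_nonneg _)
    intro k
    rw [norm_mul, Complex.norm_real, Real.norm_eq_abs]
    exact mul_le_mul_of_nonneg_right (hρbound _) (ha_nonneg k)
  -- the rewritten form
  have key : ∀ n : ℕ,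
      (n : ℂ) * (((ρ n : ℝ) : ℂ)⁻¹ * ∑' k : ℤ, ((ρ ((n : ℤ) - k) : ℝ) : ℂ) * s k
          - ∑' k : ℤ, s k)
        = ∑' k : ℤ, (((n : ℝ) * k / ((n : ℝ) - k - d) : ℝ) : ℂ) * s k := by
    intro n
    rw [← tsum_mul_left, ← Summable.tsum_sub ((hsum_ρ n).mul_left _) hsum_s, ← tsum_mul_left]
    refine tsum_congr fun k => ?_
    have hne : ((n : ℝ) - k - d) ≠ 0 := by
      have := hden ((n : ℤ) - k)
      push_cast at this
      intro h
      exact this (by linarith [h])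
    have hneC : ((n : ℂ) - k - d) ≠ 0 := by
      intro h
      apply hne
      have := congrArg Complex.re h
      simpa using this
    have hneC2 : ((n : ℂ) - d) ≠ 0 := by
      intro h
      apply hden (n : ℤ)
      have := congrArg Complex.re h
      push_cast at this ⊢
      simpa using this
    have hSC : (S : ℂ) ≠ 0 := by exact_mod_cast hS
    have hπC : (Real.pi : ℂ) ≠ 0 := by exact_mod_cast ne_of_gt hπ
    have hcoef : (n : ℂ) * (((ρ (n : ℤ) : ℝ) : ℂ)⁻¹ * ((ρ ((n : ℤ) - k) : ℝ) : ℂ) - 1)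
        = (((n : ℝ) * k / ((n : ℝ) - k - d) : ℝ) : ℂ) := by
      rw [hρ, hρ]
      push_cast
      field_simp
      ring
    calc (n : ℂ) * (((ρ (n : ℤ) : ℝ) : ℂ)⁻¹ * (((ρ ((n : ℤ) - k) : ℝ) : ℂ) * s k) - s k)
        = ((n : ℂ) * (((ρ (n : ℤ) : ℝ) : ℂ)⁻¹ * ((ρ ((n : ℤ) - k) : ℝ) : ℂ) - 1)) * s k := by
          ring
      _ = _ := by rw [hcoef]
  rw [tendsto_congr key]
  -- dominated convergence
  apply tendsto_tsum_of_dominated_convergence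
    (bound := fun k : ℤ => 4 * (|(k : ℝ)| * a k) + (2 / c) * ((k : ℝ)^2 * a k))
  · exact (hka_sum.mul_left 4).add (hs.mul_left (2 / c))
  · intro k
    have hlim : Tendsto (fun n : ℕ => ((n : ℝ) * k / ((n : ℝ) - k - d))) atTop
        (nhds (k : ℝ)) := by
      have htop : Tendsto (fun n : ℕ => (n : ℝ) - ((k : ℝ) + d)) atTop atTop :=
        tendsto_atTop_add_const_right _ _ tendsto_natCast_atTop_atTop
      have h0 : Tendsto (fun n : ℕ => ((k : ℝ) + d) / ((n : ℝ) - ((k : ℝ) + d)))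
          atTop (nhds 0) := Tendsto.div_atTop tendsto_const_nhds htop
      have hb : Tendsto (fun n : ℕ => 1 + ((k : ℝ) + d) / ((n : ℝ) - ((k : ℝ) + d)))
          atTop (nhds 1) := by
        simpa using (tendsto_const_nhds :
          Tendsto (fun _ : ℕ => (1 : ℝ)) atTop (nhds 1)).add h0
      have h1 : Tendsto (fun n : ℕ => (k : ℝ) * (1 + ((k : ℝ) + d) / ((n : ℝ) - ((k : ℝ) + d))))
          atTop (nhds (k : ℝ)) := by
        simpa using hb.const_mul (k : ℝ)
      apply h1.congr'
      filter_upwards [htop.eventually_gt_atTop 0] with n hn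
      have hne : (n : ℝ) - ((k : ℝ) + d) ≠ 0 := ne_of_gt hn
      have e : (n : ℝ) - (k : ℝ) - d = (n : ℝ) - ((k : ℝ) + d) := by ring
      rw [e]
      field_simp
      ring
    have := ((Complex.continuous_ofReal.tendsto _).comp hlim).mul_const (s k)
    simpa using this
  · filter_upwards [eventually_ge_atTop 2] with n hn
    intro k
    have hn2 : (2 : ℝ) ≤ (n : ℝ) := by exact_mod_cast hn
    have hD : c ≤ |(n : ℝ) - k - d| := by
      have := hcm ((n : ℤ) - k)
      push_cast at this
      convert this using 2
    have hDpos : 0 < |(n : ℝ) - k - d| := lt_of_lt_of_le hc hD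
    rw [norm_mul, Complex.norm_real, Real.norm_eq_abs, abs_div]
    have hcoefb : |(n : ℝ) * k| / |(n : ℝ) - k - d| ≤ 4 * |(k : ℝ)| + (2 / c) * (k : ℝ)^2 := by
      rw [div_le_iff₀ hDpos]
      rw [abs_mul, abs_of_nonneg (by positivity : (0:ℝ) ≤ (n : ℝ))]
      rcases le_or_gt (2 * |(k : ℝ)|) (n : ℝ) with hcase | hcase
      · -- |D| ≥ n - |k| - 1/2 ≥ n/4
        have hDlb : (n : ℝ) - |(k : ℝ)| - 1/2 ≤ |(n : ℝ) - k - d| := by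
          have h1 : |(n : ℝ)| - |(k : ℝ) + d| ≤ |(n : ℝ) - ((k : ℝ) + d)| :=
            abs_sub_abs_le_abs_sub _ _
          have h2 : |(k : ℝ) + d| ≤ |(k : ℝ)| + |d| := abs_add_le _ _
          have h3 : |(n : ℝ)| = (n : ℝ) := abs_of_nonneg (by positivity)
          have h4 : |(n : ℝ) - ((k : ℝ) + d)| = |(n : ℝ) - k - d| := by ring_nf
          nlinarith [hdabs]
        have h4 : (n : ℝ) * |(k : ℝ)| ≤ 4 * |(k : ℝ)| * |(n : ℝ) - k - d| := by
          nlinarith [mul_le_mul_of_nonneg_left hDlb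
              (by positivity : (0:ℝ) ≤ 4 * |(k : ℝ)|),
            mul_nonneg (abs_nonneg ((k : ℝ))) (by linarith : (0:ℝ) ≤ (n : ℝ) - 2),
            mul_le_mul_of_nonneg_left hcase (abs_nonneg ((k : ℝ)))]
        have h5 : 0 ≤ (2 / c) * (k : ℝ)^2 * |(n : ℝ) - k - d| := by positivity
        nlinarith [h4, h5]
      · -- n < 2|k|
        have h1 : (n : ℝ) * |(k : ℝ)| ≤ 2 * (k : ℝ)^2 := by
          nlinarith [abs_nonneg ((k : ℝ)), sq_abs ((k : ℝ))]
        have h2 : (2 / c) * (k : ℝ)^2 * c ≤ (2 / c) * (k : ℝ)^2 * |(n : ℝ) - k - d| :=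
          mul_le_mul_of_nonneg_left hD (by positivity)
        have h3 : (2 / c) * (k : ℝ)^2 * c = 2 * (k : ℝ)^2 := by
          field_simp
        have h6 : 0 ≤ 4 * |(k : ℝ)| * |(n : ℝ) - k - d| :=
          mul_nonneg (by positivity) (abs_nonneg _)
        have expand : (4 * |(k : ℝ)| + 2 / c * (k : ℝ)^2) * |(n : ℝ) - k - d|
            = 4 * |(k : ℝ)| * |(n : ℝ) - k - d| + 2 / c * (k : ℝ)^2 * |(n : ℝ) - k - d| := by
          ring
        linarith
    calc |(n : ℝ) * k| / |(n : ℝ) - k - d| * a k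
        ≤ (4 * |(k : ℝ)| + (2 / c) * (k : ℝ)^2) * a k :=
          mul_le_mul_of_nonneg_right hcoefb (ha_nonneg k)
      _ = 4 * (|(k : ℝ)| * a k) + (2 / c) * ((k : ℝ)^2 * a k) := by ring
end
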